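/- Let S be a starforest with center set C*, let v be a vertex not in C* whose neighbor in S is u ∈ C*, and let w be a vertex with degree 0 in S (its own star is a single vertex) with w ≠ v. Then the graph S' obtained from S by deleting edge uv and adding edge vw is a starforest with the same number of edges, admitting center set (C* \ {w}) ∪ {v}. -/

import Mathlib

open SimpleGraph

/-- A starforest is an acyclic graph in which every connected component has at most one
vertex of degree greater than 1 (i.e. every component is a star). -/
def SimpleGraph.IsStarforest {V : Type*} (H : SimpleGraph V) : Prop :=
  H.IsAcyclic ∧ ∀ c : H.ConnectedComponent,
    {v : V | H.connectedComponentMk v = c ∧ 1 < (H.neighborSet v).ncard}.Subsingleton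

/-- A center set of a starforest: a dominating set containing exactly one vertex of each
connected component. -/
def IsCenterSet {V : Type*} (S : SimpleGraph V) (C : Set V) : Prop :=
  (∀ v : V, v ∉ C → ∃ u ∈ C, S.Adj u v) ∧
  ∀ c : S.ConnectedComponent, ∃! u : V, u ∈ C ∧ u ∈ c.supp

section Aux

variable {V : Type*}

/-- Reaching an isolated vertex means being it. -/
lemma reach_isolated {G : SimpleGraph V} {w x : V} (hw : G.neighborSet w = ∅)
    (h : G.Reachable x w) : x = w := by
  obtain ⟨p⟩ := h.symm
  cases p with
  | nil => rfl
  | @cons _ d _ h q =>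
      have hd : d ∈ G.neighborSet w := h
      rw [hw] at hd
      exact hd.elim

/-- A path between two vertices different from `z` avoids `z` if `z` has at most one
neighbor. -/
lemma not_mem_support_of_subsingleton {G : SimpleGraph V} {z : V}
    (hz : (G.neighborSet z).Subsingleton) {a b : V} (p : G.Walk a b)
    (hp : p.IsPath) (ha : a ≠ z) (hb : b ≠ z) : z ∉ p.support := by
  induction p with
  | nil => simpa using fun h => ha h.symm
  | @cons a c b h q ih =>
    rw [SimpleGraph.Walk.support_cons, List.mem_cons]
    rw [SimpleGraph.Walk.cons_isPath_iff] at hp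
    rintro (rfl | hzq)
    · exact ha rfl
    · by_cases hcz : c = z
      · subst hcz
        cases q with
        | nil => exact hb rfl
        | @cons _ d _ h' q' =>
          have had : a = d := hz (by exact h.symm) (by exact h')
          exact hp.2 (by
            rw [SimpleGraph.Walk.support_cons]
            exact List.mem_cons_of_mem _ (had ▸ q'.start_mem_support))
      · exact ih hp.1 hcz hb hzq

/-- A nontrivial walk ending at `z` contains a final edge into `z`. -/
lemma exists_last_edge {G : SimpleGraph V} {a z : V} (q : G.Walk a z) (h : a ≠ z) :
    ∃ y, G.Adj y z ∧ s(y, z) ∈ q.edges := by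
  induction q with
  | nil => exact absurd rfl h
  | @cons a b c h' q ih =>
    by_cases hbz : b = c
    · subst hbz
      exact ⟨a, h', by rw [SimpleGraph.Walk.edges_cons]; exact List.mem_cons_self⟩
    · obtain ⟨y, hy, hmem⟩ := ih hbz
      exact ⟨y, hy, by rw [SimpleGraph.Walk.edges_cons]; exact List.mem_cons_of_mem _ hmem⟩

/-- A cycle avoids any vertex with at most one neighbor. -/
lemma not_mem_cycle_support_of_subsingleton {G : SimpleGraph V} {z : V}
    (hz : (G.neighborSet z).Subsingleton) {x : V} {c : G.Walk x x}
    (hc : c.IsCycle) : z ∉ c.support := by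
  intro hmem
  classical
  have key : ∀ (d : G.Walk z z), ¬ d.IsCycle := by
    intro d hd
    cases d with
    | nil => simpa using hd.three_le_length
    | @cons _ e _ h q =>
      rw [SimpleGraph.Walk.cons_isCycle_iff] at hd
      obtain ⟨y, hy, hmemq⟩ := exists_last_edge q h.ne'
      have hye : y = e := hz (by exact hy.symm) (by exact h)
      subst hye
      rw [Sym2.eq_swap] at hmemq
      exact hd.2 hmemq
  exact key _ (hc.rotate hmem)

end Aux

/-- If `S` is a starforest with center set `C*`, `v ∉ C*` is a leaf with
neighbor `u ∈ C*`, and `w ≠ v` is an isolated vertex of `S`, then the graph obtained from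
`S` by deleting the edge `uv` and adding the edge `vw` is a starforest with the same number
of edges, admitting center set `(C* \ {w}) ∪ {v}`. -/
theorem star_edge_swap {V : Type*} [Fintype V] (S : SimpleGraph V) (Cs : Set V)
    (hsf : S.IsStarforest) (hcs : IsCenterSet S Cs)
    (u v w : V) (hv : v ∉ Cs) (hu : u ∈ Cs) (huv : S.Adj u v)
    (hw : S.neighborSet w = ∅) (hwv : w ≠ v) :
    (SimpleGraph.fromEdgeSet ((S.edgeSet \ {s(u, v)}) ∪ {s(v, w)})).IsStarforest ∧
    (SimpleGraph.fromEdgeSet ((S.edgeSet \ {s(u, v)}) ∪ {s(v, w)})).edgeSet.ncard =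
      S.edgeSet.ncard ∧
    IsCenterSet (SimpleGraph.fromEdgeSet ((S.edgeSet \ {s(u, v)}) ∪ {s(v, w)}))
      ((Cs \ {w}) ∪ {v}) := by
  classical
  set G := SimpleGraph.fromEdgeSet ((S.edgeSet \ {s(u, v)}) ∪ {s(v, w)}) with hG
  have hwu : w ≠ u := by
    rintro rfl
    have : v ∈ S.neighborSet w := huv
    rw [hw] at this; exact this
  have hvwE : s(v, w) ∉ S.edgeSet := by
    intro h
    have : v ∈ S.neighborSet w := (S.mem_edgeSet.mp h).symm
    rw [hw] at this; exact this
  -- adjacency characterization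
  have hadj : ∀ a b : V, G.Adj a b ↔ (S.Adj a b ∧ s(a, b) ≠ s(u, v)) ∨ s(a, b) = s(v, w) := by
    intro a b
    rw [hG, SimpleGraph.fromEdgeSet_adj]
    simp only [Set.mem_union, Set.mem_diff, Set.mem_singleton_iff, SimpleGraph.mem_edgeSet]
    constructor
    · rintro ⟨⟨h1, h2⟩ | h1, _⟩
      · exact Or.inl ⟨h1, h2⟩
      · exact Or.inr h1
    · rintro (⟨h1, h2⟩ | h1)
      · exact ⟨Or.inl ⟨h1, h2⟩, h1.ne⟩
      · refine ⟨Or.inr h1, fun hab => hwv ?_⟩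
        subst hab
        rw [Sym2.eq_iff] at h1
        rcases h1 with ⟨rfl, rfl⟩ | ⟨rfl, rfl⟩ <;> rfl
  -- v is a leaf of S with unique neighbor u
  have hNv : S.neighborSet v = {u} := by
    ext x
    simp only [SimpleGraph.mem_neighborSet, Set.mem_singleton_iff]
    constructor
    · intro hx
      by_contra hxu
      by_cases hxC : x ∈ Cs
      · obtain ⟨y, _, hyu⟩ := hcs.2 (S.connectedComponentMk v)
        have h1 : x = y := hyu x ⟨hxC, by
          rw [SimpleGraph.ConnectedComponent.mem_supp_iff]
          exact SimpleGraph.ConnectedComponent.sound hx.symm.reachable⟩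
        have h2 : u = y := hyu u ⟨hu, by
          rw [SimpleGraph.ConnectedComponent.mem_supp_iff]
          exact SimpleGraph.ConnectedComponent.sound huv.reachable⟩
        exact hxu (h1.trans h2.symm)
      · obtain ⟨c, hc, hcx⟩ := hcs.1 x hxC
        have hcv : c ≠ v := fun h => hv (h ▸ hc)
        have hdx : 1 < (S.neighborSet x).ncard := by
          rw [Set.one_lt_ncard (Set.toFinite _)]
          exact ⟨v, hx.symm, c, hcx.symm, fun h => hcv h.symm⟩
        have hdv : 1 < (S.neighborSet v).ncard := by
          rw [Set.one_lt_ncard (Set.toFinite _)]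
          exact ⟨u, huv.symm, x, hx, fun h => hxu h.symm⟩
        have hxv : x = v := hsf.2 (S.connectedComponentMk v)
          ⟨SimpleGraph.ConnectedComponent.sound hx.symm.reachable, hdx⟩ ⟨rfl, hdv⟩
        exact hx.ne' hxv
    · rintro rfl; exact huv.symm
  have hsubSv : (S.neighborSet v).Subsingleton := by
    rw [hNv]; exact Set.subsingleton_singleton
  -- neighbor sets in G
  have hNGv : G.neighborSet v = {w} := by
    ext x
    simp only [SimpleGraph.mem_neighborSet, Set.mem_singleton_iff, hadj]
    constructor
    · rintro (⟨h1, h2⟩ | h1)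
      · exfalso
        have hx : x ∈ S.neighborSet v := h1
        rw [hNv, Set.mem_singleton_iff] at hx
        subst hx
        exact h2 (Sym2.eq_swap)
      · exact Sym2.congr_right.mp h1
    · rintro rfl; exact Or.inr rfl
  have hNGw : G.neighborSet w = {v} := by
    ext x
    simp only [SimpleGraph.mem_neighborSet, Set.mem_singleton_iff, hadj]
    constructor
    · rintro (⟨h1, _⟩ | h1)
      · exfalso
        have hx : x ∈ S.neighborSet w := h1
        rw [hw] at hx; exact hx
      · exact Sym2.congr_right.mp (h1.trans Sym2.eq_swap)
    · rintro rfl; exact Or.inr Sym2.eq_swap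
  have hsubGv : (G.neighborSet v).Subsingleton := by
    rw [hNGv]; exact Set.subsingleton_singleton
  have hNGsub : ∀ x, x ≠ v → x ≠ w → G.neighborSet x ⊆ S.neighborSet x := by
    intro x hxv hxw y hy
    rw [SimpleGraph.mem_neighborSet, hadj] at hy
    rcases hy with ⟨h1, _⟩ | h1
    · exact h1
    · rw [Sym2.eq_iff] at h1
      rcases h1 with ⟨h1, _⟩ | ⟨h1, _⟩
      · exact absurd h1 hxv
      · exact absurd h1 hxw
  -- reachability transfer G → S
  have hGtoS : ∀ x y : V, x ≠ v → y ≠ v → G.Reachable x y → S.Reachable x y := by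
    intro x y hx hy hr
    obtain ⟨p0⟩ := hr
    obtain ⟨p, hp⟩ := p0.toPath
    have hvp : v ∉ p.support := not_mem_support_of_subsingleton hsubGv p hp hx hy
    have hedges : ∀ e ∈ p.edges, e ∈ S.edgeSet := by
      intro e he
      have heG : e ∈ G.edgeSet := p.edges_subset_edgeSet he
      rw [hG, SimpleGraph.edgeSet_fromEdgeSet] at heG
      obtain ⟨hmem, _⟩ := heG
      rcases hmem with ⟨h1, _⟩ | h1
      · exact h1
      · rw [Set.mem_singleton_iff] at h1
        subst h1
        exact absurd (p.fst_mem_support_of_mem_edges he) hvp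
    exact ⟨p.transfer S hedges⟩
  -- reachability transfer S → G
  have hStoG : ∀ x y : V, x ≠ v → y ≠ v → S.Reachable x y → G.Reachable x y := by
    intro x y hx hy hr
    obtain ⟨p0⟩ := hr
    obtain ⟨p, hp⟩ := p0.toPath
    have hvp : v ∉ p.support := not_mem_support_of_subsingleton hsubSv p hp hx hy
    have hedges : ∀ e ∈ p.edges, e ∈ G.edgeSet := by
      intro e he
      have heS : e ∈ S.edgeSet := p.edges_subset_edgeSet he
      rw [hG, SimpleGraph.edgeSet_fromEdgeSet]
      refine ⟨Or.inl ⟨heS, ?_⟩, S.not_isDiag_of_mem_edgeSet heS⟩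
      intro h
      rw [Set.mem_singleton_iff] at h
      subst h
      exact hvp (p.snd_mem_support_of_mem_edges he)
    exact ⟨p.transfer G hedges⟩
  have hreachw : ∀ x, S.Reachable x w → x = w := fun x h => reach_isolated hw h
  have hGvw : G.Adj v w := (hadj v w).mpr (Or.inr rfl)
  refine ⟨⟨?_, ?_⟩, ?_, ?_⟩
  · -- acyclic
    intro x c hc
    have hvsup : v ∉ c.support := not_mem_cycle_support_of_subsingleton hsubGv hc
    have hedges : ∀ e ∈ c.edges, e ∈ S.edgeSet := by
      intro e he
      have heG : e ∈ G.edgeSet := c.edges_subset_edgeSet he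
      rw [hG, SimpleGraph.edgeSet_fromEdgeSet] at heG
      obtain ⟨hmem, _⟩ := heG
      rcases hmem with ⟨h1, _⟩ | h1
      · exact h1
      · rw [Set.mem_singleton_iff] at h1
        subst h1
        exact absurd (c.fst_mem_support_of_mem_edges he) hvsup
    exact hsf.1 (c.transfer S hedges) (hc.transfer hedges)
  · -- components are stars
    intro comp x hx y hy
    simp only [Set.mem_setOf_eq] at hx hy
    have hdeg : ∀ z : V, 1 < (G.neighborSet z).ncard → z ≠ v ∧ z ≠ w := by
      intro z hz
      constructor
      · rintro rfl; rw [hNGv, Set.ncard_singleton] at hz; omega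
      · rintro rfl; rw [hNGw, Set.ncard_singleton] at hz; omega
    obtain ⟨hxv, hxw⟩ := hdeg x hx.2
    obtain ⟨hyv, hyw⟩ := hdeg y hy.2
    have hreach : G.Reachable x y :=
      SimpleGraph.ConnectedComponent.exact (hx.1.trans hy.1.symm)
    have hSreach : S.Reachable x y := hGtoS x y hxv hyv hreach
    refine hsf.2 (S.connectedComponentMk x) ⟨rfl, ?_⟩
      ⟨(SimpleGraph.ConnectedComponent.sound hSreach).symm, ?_⟩
    · exact lt_of_lt_of_le hx.2 (Set.ncard_le_ncard (hNGsub x hxv hxw) (Set.toFinite _))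
    · exact lt_of_lt_of_le hy.2 (Set.ncard_le_ncard (hNGsub y hyv hyw) (Set.toFinite _))
  · -- edge count
    have hdiag : ((S.edgeSet \ {s(u, v)}) ∪ {s(v, w)}) \ {e : Sym2 V | e.IsDiag} =
        (S.edgeSet \ {s(u, v)}) ∪ {s(v, w)} := by
      refine Set.eq_of_subset_of_subset (fun e he => he.1) (fun e he => ⟨he, ?_⟩)
      intro hd
      rcases he with ⟨h1, _⟩ | h1
      · exact (S.not_isDiag_of_mem_edgeSet h1) hd
      · rw [Set.mem_singleton_iff] at h1
        subst h1
        exact hwv (Sym2.mk_isDiag_iff.mp hd).symm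
    rw [hG, SimpleGraph.edgeSet_fromEdgeSet, show Sym2.diagSet = {e : Sym2 V | e.IsDiag} from rfl, hdiag]
    have h1 : s(v, w) ∉ S.edgeSet \ {s(u, v)} := fun h => hvwE h.1
    rw [Set.union_singleton, Set.ncard_insert_of_notMem h1 (Set.toFinite _),
      Set.ncard_diff_singleton_add_one (S.mem_edgeSet.mpr huv) (Set.toFinite _)]
  · -- center set
    constructor
    · intro x hx
      have hxv : x ≠ v := fun h => hx (Set.mem_union_right _ (by rw [h]; rfl))
      by_cases hxw : x = w
      · subst hxw
        exact ⟨v, Set.mem_union_right _ rfl, hGvw⟩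
      · have hxC : x ∉ Cs := fun h => hx (Set.mem_union_left _ ⟨h, hxw⟩)
        obtain ⟨c, hc, hcx⟩ := hcs.1 x hxC
        have hcw : c ≠ w := by
          intro h
          rw [h] at hcx
          have : x ∈ S.neighborSet w := hcx
          rw [hw] at this; exact this
        have hxu : x ≠ u := by
          rintro rfl
          exact hx (Set.mem_union_left _ ⟨hu, fun h => hwu (Set.mem_singleton_iff.mp h).symm⟩)
        refine ⟨c, Set.mem_union_left _ ⟨hc, hcw⟩, (hadj c x).mpr (Or.inl ⟨hcx, ?_⟩)⟩
        intro h
        rw [Sym2.eq_iff] at h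
        rcases h with ⟨_, h2⟩ | ⟨_, h2⟩
        · exact hxv h2
        · exact hxu h2
    · intro comp
      obtain ⟨x, hxcomp⟩ := comp.exists_rep
      by_cases hxvw : G.Reachable x v
      · refine ⟨v, ⟨Set.mem_union_right _ rfl, ?_⟩, ?_⟩
        · rw [SimpleGraph.ConnectedComponent.mem_supp_iff, ← hxcomp]
          exact SimpleGraph.ConnectedComponent.sound hxvw.symm
        · rintro y ⟨hyC, hysupp⟩
          rw [SimpleGraph.ConnectedComponent.mem_supp_iff, ← hxcomp] at hysupp
          have hyv : G.Reachable y v :=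
            (SimpleGraph.ConnectedComponent.exact hysupp).trans hxvw
          by_contra hne
          have hyw : G.Reachable y w := hyv.trans hGvw.reachable
          have hyeq : y = w := hreachw y (hGtoS y w hne hwv hyw)
          subst hyeq
          rcases hyC with ⟨_, hww⟩ | hwv'
          · exact hww rfl
          · exact hwv (Set.mem_singleton_iff.mp hwv')
      · have hxv : x ≠ v := by
          intro h
          apply hxvw
          rw [h]
        have hxw : x ≠ w := by
          rintro rfl
          exact hxvw hGvw.symm.reachable
        obtain ⟨c0, ⟨hc0C, hc0supp⟩, hc0uniq⟩ := hcs.2 (S.connectedComponentMk x)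
        rw [SimpleGraph.ConnectedComponent.mem_supp_iff] at hc0supp
        have hc0x : S.Reachable c0 x := SimpleGraph.ConnectedComponent.exact hc0supp
        have hc0w : c0 ≠ w := by
          rintro rfl
          exact hxw (hreachw x hc0x.symm)
        have hc0v : c0 ≠ v := fun h => hv (h ▸ hc0C)
        refine ⟨c0, ⟨Set.mem_union_left _ ⟨hc0C, hc0w⟩, ?_⟩, ?_⟩
        · rw [SimpleGraph.ConnectedComponent.mem_supp_iff, ← hxcomp]
          exact SimpleGraph.ConnectedComponent.sound (hStoG c0 x hc0v hxv hc0x)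
        · rintro y ⟨hyC, hysupp⟩
          rw [SimpleGraph.ConnectedComponent.mem_supp_iff, ← hxcomp] at hysupp
          have hyx : G.Reachable y x := SimpleGraph.ConnectedComponent.exact hysupp
          have hyv : y ≠ v := by
            rintro rfl
            exact hxvw hyx.symm
          have hySx : S.Reachable y x := hGtoS y x hyv hxv hyx
          have hyCs : y ∈ Cs := by
            rcases hyC with ⟨h1, _⟩ | h1
            · exact h1
            · exact absurd (Set.mem_singleton_iff.mp h1) hyv
          exact hc0uniq y ⟨hyCs, by
            rw [SimpleGraph.ConnectedComponent.mem_supp_iff]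
            exact SimpleGraph.ConnectedComponent.sound hySx⟩
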